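/- arXiv:2001.09979 — 3 statements merged into one kernel-verified Lean document; each statement's English description precedes it below -/
import Mathlib

section
/- With the explicit contracting homotopy σ of the Bar complex of ℕ defined by σ_{-1}(1)=[0], σ_0([n]) = Σ_{k=1}^{n}[k−1,k], and σ_n = s_{x_0}∘(Id − σ_{n−1}∘∂), one has, modulo degenerate simplices: σ_n([x_0,…,x_n]) = (−1)^n Σ_{k=x_{n−1}+1}^{x_n} [x_0,…,x_{n−1},k−1,k] when x_n > x_{n−1}, and σ_n([x_0,…,x_n]) = (−1)^{n−1} Σ_{k=x_n+1}^{x_{n−1}} [x_0,…,x_{n−1},k−1,k] when x_n < x_{n−1}. -/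
/-- The differential of the Bar chain complex of ℕ: alternating sum of the face maps. -/
noncomputable def barD {n : ℕ} (c : (Fin (n + 2) → ℕ) →₀ ℤ) : (Fin (n + 1) → ℕ) →₀ ℤ :=
  c.sum fun f k => ∑ i : Fin (n + 2), Finsupp.single (f ∘ i.succAbove) ((-1) ^ (i : ℕ) * k)

/-- The operator prepending a vertex: [x_0,…,x_n] ↦ [x,x_0,…,x_n], extended linearly. -/
noncomputable def prependChain (x : ℕ) {n : ℕ} (c : (Fin (n + 1) → ℕ) →₀ ℤ) :
    (Fin (n + 2) → ℕ) →₀ ℤ :=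
  c.sum fun f k => Finsupp.single (Fin.cons x f) k

/-- The explicit contracting homotopy of the Bar complex of ℕ:
σ_0([n]) = Σ_{k=1}^{n} [k−1,k] and σ_n = s_{x_0} ∘ (Id − σ_{n−1} ∘ ∂). -/
noncomputable def sigmaFun : (n : ℕ) → (Fin (n + 1) → ℕ) → ((Fin (n + 2) → ℕ) →₀ ℤ)
  | 0 => fun f => ∑ k ∈ Finset.range (f 0),
      Finsupp.single (fun j : Fin 2 => if j = 0 then k else k + 1) (1 : ℤ)
  | (n + 1) => fun f =>
      prependChain (f 0)
        (Finsupp.single f 1 - (barD (Finsupp.single f 1)).sum fun g z => z • sigmaFun n g)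

/-- A Bar simplex is degenerate if two consecutive entries coincide. -/
def IsDegen {n : ℕ} (g : Fin (n + 1) → ℕ) : Prop :=
  ∃ i : Fin n, g i.castSucc = g i.succ

/-- The simplex [x_0,…,x_n,a,b] obtained from [x_0,…,x_{n+1}] by replacing the last
vertex by the pair (a,b). -/
def extSimp {n : ℕ} (f : Fin (n + 2) → ℕ) (a b : ℕ) : Fin (n + 3) → ℕ :=
  fun j => if h : (j : ℕ) < n + 1 then f ⟨(j : ℕ), by omega⟩
    else if (j : ℕ) = n + 1 then a else b

lemma prepend_apply (x : ℕ) {n : ℕ} (c : (Fin (n + 1) → ℕ) →₀ ℤ) (g : Fin (n + 2) → ℕ) :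
    prependChain x c g = if g 0 = x then c (Fin.tail g) else 0 := by
  have h : prependChain x c = Finsupp.mapDomain (Fin.cons x) c := rfl
  rw [h]
  split_ifs with h0
  · have : g = Fin.cons x (Fin.tail g) := by
      rw [← h0]; exact (Fin.cons_self_tail g).symm
    have inj : Function.Injective (fun t : Fin (n+1) → ℕ => (Fin.cons x t : Fin (n+2) → ℕ)) := by
      intro a b hab
      funext i
      have := congrFun hab i.succ
      simpa using this
    conv_lhs => rw [this]
    exact Finsupp.mapDomain_apply inj c (Fin.tail g)
  · apply Finsupp.mapDomain_notin_range
    rintro ⟨t, rfl⟩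
    exact h0 (by simp)

lemma sigma_succ (n : ℕ) (f : Fin (n + 2) → ℕ) :
    sigmaFun (n + 1) f = prependChain (f 0)
      (Finsupp.single f 1 -
        ∑ i : Fin (n + 2), ((-1 : ℤ) ^ (i : ℕ)) • sigmaFun n (f ∘ i.succAbove)) := by
  simp only [sigmaFun]
  congr 2
  have hb : barD (Finsupp.single f (1:ℤ)) =
      ∑ i : Fin (n + 2), Finsupp.single (f ∘ i.succAbove) ((-1 : ℤ) ^ (i : ℕ)) := by
    rw [barD, Finsupp.sum_single_index] <;> simp
  have hl : ∀ c : ((Fin (n + 1) → ℕ) →₀ ℤ),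
      (c.sum fun g z => z • sigmaFun n g) = Finsupp.linearCombination ℤ (sigmaFun n) c :=
    fun c => (Finsupp.linearCombination_apply ℤ c).symm
  rw [hl, hb, map_sum]
  simp [Finsupp.linearCombination_single]

lemma extSimp_zero {n : ℕ} (f : Fin (n + 2) → ℕ) (a b : ℕ) : extSimp f a b 0 = f 0 := by
  simp only [extSimp]
  rw [dif_pos (by simp)]
  congr

lemma extSimp_cons {n : ℕ} (f : Fin (n + 3) → ℕ) (a b : ℕ) :
    extSimp f a b = Fin.cons (f 0) (extSimp (Fin.tail f) a b) := by
  funext j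
  refine Fin.cases ?_ (fun i => ?_) j
  · rw [Fin.cons_zero, extSimp_zero]
  · rw [Fin.cons_succ]
    simp only [extSimp, Fin.val_succ, Fin.tail]
    by_cases h1 : (i : ℕ) < n + 1
    · rw [dif_pos (by omega), dif_pos h1]
      congr
    · rw [dif_neg (by omega), dif_neg h1]
      by_cases h2 : (i : ℕ) = n + 1
      · rw [if_pos (by omega), if_pos h2]
      · rw [if_neg (by omega), if_neg h2]

noncomputable def Phi (n : ℕ) (f : Fin (n + 2) → ℕ) : (Fin (n + 3) → ℕ) →₀ ℤ :=
  (-1 : ℤ) ^ (n + 1) •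
    ((∑ k ∈ Finset.Icc (f ⟨n, by simp⟩ + 1) (f (Fin.last (n + 1))),
        Finsupp.single (extSimp f (k - 1) k) (1 : ℤ)) -
     (∑ k ∈ Finset.Icc (f (Fin.last (n + 1)) + 1) (f ⟨n, by simp⟩),
        Finsupp.single (extSimp f (k - 1) k) (1 : ℤ)))

lemma phi_apply (n : ℕ) (f : Fin (n + 2) → ℕ) (g : Fin (n + 3) → ℕ) :
    Phi n f g = (-1 : ℤ) ^ (n + 1) *
      ((∑ k ∈ Finset.Icc (f ⟨n, by simp⟩ + 1) (f (Fin.last (n + 1))),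
          (Finsupp.single (extSimp f (k - 1) k) (1 : ℤ)) g) -
       (∑ k ∈ Finset.Icc (f (Fin.last (n + 1)) + 1) (f ⟨n, by simp⟩),
          (Finsupp.single (extSimp f (k - 1) k) (1 : ℤ)) g)) := by
  simp [Phi, Finsupp.sub_apply, Finset.sum_apply']

lemma phi_zero (n : ℕ) (f : Fin (n + 2) → ℕ) (g : Fin (n + 3) → ℕ) (h : g 0 ≠ f 0) :
    Phi n f g = 0 := by
  rw [phi_apply]
  have hz : ∀ k : ℕ, (Finsupp.single (extSimp f (k - 1) k) (1 : ℤ)) g = 0 := by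
    intro k
    apply Finsupp.single_eq_of_ne'
    intro he
    exact h (by rw [← he, extSimp_zero])
  simp [hz]

lemma phi_cons (n : ℕ) (f : Fin (n + 3) → ℕ) (g : Fin (n + 4) → ℕ) (h0 : g 0 = f 0) :
    Phi (n + 1) f g = - Phi n (Fin.tail f) (Fin.tail g) := by
  rw [phi_apply, phi_apply]
  have ht1 : Fin.tail f ⟨n, by omega⟩ = f ⟨n + 1, by omega⟩ := by
    simp [Fin.tail]
  have ht2 : Fin.tail f (Fin.last (n + 1)) = f (Fin.last (n + 2)) := by
    simp [Fin.tail]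
  have hterm : ∀ k : ℕ, (Finsupp.single (extSimp f (k - 1) k) (1 : ℤ)) g =
      (Finsupp.single (extSimp (Fin.tail f) (k - 1) k) (1 : ℤ)) (Fin.tail g) := by
    intro k
    simp only [Finsupp.single_apply]
    congr 1
    rw [extSimp_cons]
    apply propext
    constructor <;> intro h
    · rw [← h, Fin.tail_cons]
    · rw [h, ← h0, Fin.cons_self_tail]
  simp only [hterm, ht1, ht2]
  rw [pow_succ]
  ring

lemma not_degen_tail {n : ℕ} {g : Fin (n + 2) → ℕ} (h : ¬ IsDegen g) :
    ¬ IsDegen (Fin.tail g) := by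
  rintro ⟨i, hi⟩
  refine h ⟨i.succ, ?_⟩
  exact hi

lemma not_degen_01 {n : ℕ} {g : Fin (n + 2) → ℕ} (h : ¬ IsDegen g) : g 0 ≠ g 1 := by
  intro he
  exact h ⟨0, by simpa using he⟩

lemma sigma_first {n : ℕ} (h : Fin (n + 2) → ℕ) (t : Fin (n + 3) → ℕ)
    (ht : t 0 ≠ h 0) : sigmaFun (n + 1) h t = 0 := by
  simp only [sigmaFun, prepend_apply]
  rw [if_neg ht]

lemma sigma0_apply (h : Fin 1 → ℕ) (t : Fin 2 → ℕ) :
    sigmaFun 0 h t = if t 0 < h 0 ∧ t 1 = t 0 + 1 then 1 else 0 := by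
  simp only [sigmaFun]
  rw [Finset.sum_apply']
  simp only [Finsupp.single_apply]
  have heq : ∀ k : ℕ, ((fun j : Fin 2 => if j = 0 then k else k + 1) = t) ↔
      (k = t 0 ∧ t 1 = t 0 + 1) := by
    intro k
    constructor
    · intro h
      have h0 := congrFun h 0
      have h1 := congrFun h 1
      simp at h0 h1
      omega
    · rintro ⟨rfl, h1⟩
      funext j
      fin_cases j <;> simp <;> try omega
  simp only [heq, ite_and]
  rw [Finset.sum_ite_eq']
  simp only [Finset.mem_range]

lemma base_case (f : Fin 2 → ℕ) (g : Fin 3 → ℕ) (hg : ¬ IsDegen g) :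
    sigmaFun 1 f g = Phi 0 f g := by
  rw [sigma_succ, prepend_apply]
  by_cases h0 : g 0 = f 0
  · rw [if_pos h0]
    have hg01 : g 0 ≠ g 1 := not_degen_01 hg
    rw [Finsupp.sub_apply, Finset.sum_apply', Fin.sum_univ_two]
    have h1 : Finsupp.single f (1:ℤ) (Fin.tail g) = 0 := by
      apply Finsupp.single_eq_of_ne'
      intro he
      apply hg01
      rw [h0, he]; rfl
    have e0 : (f ∘ (0 : Fin 2).succAbove) 0 = f 1 := rfl
    have e1 : (f ∘ (1 : Fin 2).succAbove) 0 = f 0 := rfl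
    have t0 : Fin.tail g 0 = g 1 := rfl
    have t1 : Fin.tail g 1 = g 2 := rfl
    rw [phi_apply]
    have hf0 : f ⟨0, by omega⟩ = f 0 := rfl
    have hlast : f (Fin.last 1) = f 1 := rfl
    have hext : ∀ k : ℕ, (Finsupp.single (extSimp f (k - 1) k) (1:ℤ)) g =
        if k = g 2 then (if k - 1 = g 1 then 1 else 0) else 0 := by
      intro k
      rw [Finsupp.single_apply]
      have : (extSimp f (k - 1) k = g) ↔ (k = g 2 ∧ k - 1 = g 1) := by
        constructor
        · intro h
          have h2 := congrFun h 2
          have h1' := congrFun h 1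
          simp [extSimp] at h2 h1'
          omega
        · rintro ⟨h2, h1'⟩
          funext j
          fin_cases j
          · show extSimp f (k-1) k 0 = g 0
            rw [extSimp_zero, ← h0]
          · simp [extSimp]; omega
          · simp [extSimp]; omega
      simp only [this, ite_and]
    simp only [hext, hf0, hlast]
    rw [Finset.sum_ite_eq', Finset.sum_ite_eq']
    simp only [Fin.val_zero, Fin.val_one, pow_zero, pow_one, one_smul, neg_smul,
      Finsupp.neg_apply, Finsupp.smul_apply, smul_eq_mul, sigma0_apply, e0, e1, t0, t1, h1,
      Finset.mem_Icc]
    split_ifs <;> omega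
  · rw [if_neg h0, phi_zero _ _ _ h0]

lemma main_lemma (n : ℕ) : ∀ (f : Fin (n + 2) → ℕ) (g : Fin (n + 3) → ℕ), ¬ IsDegen g →
    sigmaFun (n + 1) f g = Phi n f g := by
  induction n with
  | zero =>
      intro f g hg
      exact base_case f g hg
  | succ m ih =>
      intro f g hg
      rw [sigma_succ, prepend_apply]
      by_cases h0 : g 0 = f 0
      · rw [if_pos h0]
        have hg01 : g 0 ≠ g 1 := not_degen_01 hg
        rw [Finsupp.sub_apply, Finset.sum_apply']
        have h1 : Finsupp.single f (1:ℤ) (Fin.tail g) = 0 := by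
          apply Finsupp.single_eq_of_ne'
          intro he
          apply hg01
          rw [h0, he]; rfl
        have h2 : ∀ i : Fin (m + 3), i ≠ 0 →
            (((-1 : ℤ) ^ (i : ℕ)) • sigmaFun (m + 1) (f ∘ i.succAbove)) (Fin.tail g) = 0 := by
          intro i hi
          rw [Finsupp.smul_apply, sigma_first, smul_zero]
          have : (f ∘ i.succAbove) 0 = f 0 := by
            simp [Fin.succAbove_ne_zero_zero hi]
          rw [this, ← h0]
          show g 1 ≠ g 0
          exact fun he => hg01 he.symm
        rw [Fintype.sum_eq_single 0 h2]
        have h3 : f ∘ (0 : Fin (m+3)).succAbove = Fin.tail f := by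
          funext i; simp [Fin.zero_succAbove, Fin.tail]
        rw [h3]
        simp only [Fin.val_zero, pow_zero, one_smul]
        rw [h1, ih (Fin.tail f) (Fin.tail g) (not_degen_tail hg), phi_cons m f g h0]
        ring
      · rw [if_neg h0, phi_zero _ _ _ h0]


/-- Modulo degenerate simplices (i.e. after evaluating coefficients at any
nondegenerate simplex g), σ_{n+1}([x_0,…,x_{n+1}]) equals
(−1)^{n+1} Σ_{k=x_n+1}^{x_{n+1}} [x_0,…,x_n,k−1,k] when x_{n+1} > x_n, and
(−1)^n Σ_{k=x_{n+1}+1}^{x_n} [x_0,…,x_n,k−1,k] when x_{n+1} < x_n. -/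
theorem sigmaFun_explicit_formula (n : ℕ) (f : Fin (n + 2) → ℕ) :
    ((f ⟨n, by omega⟩ < f (Fin.last (n + 1))) →
      ∀ g : Fin (n + 3) → ℕ, ¬ IsDegen g →
        sigmaFun (n + 1) f g =
          (-1 : ℤ) ^ (n + 1) *
            (∑ k ∈ Finset.Icc (f ⟨n, by omega⟩ + 1) (f (Fin.last (n + 1))),
              Finsupp.single (extSimp f (k - 1) k) (1 : ℤ)) g) ∧
    ((f (Fin.last (n + 1)) < f ⟨n, by omega⟩) →
      ∀ g : Fin (n + 3) → ℕ, ¬ IsDegen g →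
        sigmaFun (n + 1) f g =
          (-1 : ℤ) ^ n *
            (∑ k ∈ Finset.Icc (f (Fin.last (n + 1)) + 1) (f ⟨n, by omega⟩),
              Finsupp.single (extSimp f (k - 1) k) (1 : ℤ)) g) := by
  constructor
  · intro hlt g hg
    rw [main_lemma n f g hg, phi_apply]
    have he : Finset.Icc (f (Fin.last (n + 1)) + 1) (f ⟨n, by omega⟩) = ∅ :=
      Finset.Icc_eq_empty (by omega)
    rw [he, Finset.sum_empty, sub_zero, Finset.sum_apply']
  · intro hlt g hg
    rw [main_lemma n f g hg, phi_apply]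
    have he : Finset.Icc (f ⟨n, by omega⟩ + 1) (f (Fin.last (n + 1))) = ∅ :=
      Finset.Icc_eq_empty (by omega)
    rw [he, Finset.sum_empty, Finset.sum_apply', pow_succ]
    ring
end

section
/- Let H be a Hilbert space and F ∈ L(H) a bounded operator. Then the operator 1 + (1/4)(F − F*)(F* − F) is a positive invertible operator; denoting its inverse by T, the operator F̃ = ((1/4)(FF* − F*F) + (1/2)(F + F*)) · T satisfies: if F² = 1 then F̃² = 1 and F̃* = F̃. -/
open ContinuousLinearMap

lemma tilde_aux {R : Type*} [Ring R] [Algebra ℂ R] [StarRing R] [StarModule ℂ R]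
    (F G T : R) (hFG : star F = G) (hF : F * F = 1)
    (hT1 : (1 + (1/4:ℂ) • ((F - G) * (G - F))) * T = 1)
    (hT2 : T * (1 + (1/4:ℂ) • ((F - G) * (G - F))) = 1) :
    (((1/4:ℂ) • (F*G - G*F) + (1/2:ℂ) • (F+G)) * T) *
      (((1/4:ℂ) • (F*G - G*F) + (1/2:ℂ) • (F+G)) * T) = 1 ∧
    star ((((1/4:ℂ) • (F*G - G*F) + (1/2:ℂ) • (F+G)) * T)) =
      ((1/4:ℂ) • (F*G - G*F) + (1/2:ℂ) • (F+G)) * T := by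
  have hGF : star G = F := by rw [← hFG, star_star]
  have hG : G * G = 1 := by
    have := congrArg star hF
    rwa [star_mul, star_one, hFG] at this
  set S : R := 1 + (1/4:ℂ) • ((F - G) * (G - F)) with hS
  set N : R := (1/4:ℂ) • (F*G - G*F) + (1/2:ℂ) • (F+G) with hN
  have hF' : ∀ x : R, F * (F * x) = x := fun x => by rw [← mul_assoc, hF, one_mul]
  have hG' : ∀ x : R, G * (G * x) = x := fun x => by rw [← mul_assoc, hG, one_mul]
  have hNS : N * S = S * N := by
    rw [hN, hS]
    simp only [mul_add, add_mul, sub_mul, mul_sub, smul_mul_assoc, mul_smul_comm, smul_smul,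
      mul_assoc, mul_one, one_mul, hF, hG, hF', hG', smul_sub, smul_add]
    module
  have hNN : N * N = S * S := by
    rw [hN, hS]
    simp only [mul_add, add_mul, sub_mul, mul_sub, smul_mul_assoc, mul_smul_comm, smul_smul,
      mul_assoc, mul_one, one_mul, hF, hG, hF', hG', smul_sub, smul_add]
    module
  have hTN : T * N = N * T := by
    calc T * N = T * N * (S * T) := by rw [hT1, mul_one]
    _ = T * (N * S) * T := by noncomm_ring
    _ = T * (S * N) * T := by rw [hNS]
    _ = (T * S) * (N * T) := by noncomm_ring
    _ = N * T := by rw [hT2, one_mul]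
  constructor
  · calc (N * T) * (N * T) = N * (T * N) * T := by noncomm_ring
    _ = N * (N * T) * T := by rw [hTN]
    _ = (N * N) * (T * T) := by noncomm_ring
    _ = (S * S) * (T * T) := by rw [hNN]
    _ = S * (S * T) * T := by noncomm_ring
    _ = S * T := by rw [hT1, mul_one, hT1]
    _ = 1 := hT1
  · have hstarS : star S = S := by
      rw [hS]
      simp only [star_add, star_one, star_smul, star_mul, star_sub, hFG, hGF,
        Complex.star_def, map_div₀, map_one, Complex.conj_ofNat]
    have hstarN : star N = N := by
      rw [hN]
      simp only [star_add, star_smul, star_mul, star_sub, hFG, hGF,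
        Complex.star_def, map_div₀, map_one, Complex.conj_ofNat]
      rw [add_comm G F]
    have hstarT : star T = T := by
      have h1 : star T * S = 1 := by rw [← hstarS, ← star_mul, hT1, star_one]
      calc star T = star T * (S * T) := by rw [hT1, mul_one]
      _ = (star T * S) * T := by rw [mul_assoc]
      _ = T := by rw [h1, one_mul]
    rw [star_mul, hstarT, hstarN, hTN]

section MainAux

variable {H : Type*} [NormedAddCommGroup H] [InnerProductSpace ℂ H] [CompleteSpace H]

lemma tilde_B_eq (F : H →L[ℂ] H) :
    ((1/2:ℂ) • (F - adjoint F)) ∘L ((1 : H →L[ℂ] H) ∘L adjoint ((1/2:ℂ) • (F - adjoint F)))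
      = (1/4:ℂ) • ((F - adjoint F) * (adjoint F - F)) := by
  simp only [← star_eq_adjoint, ← ContinuousLinearMap.mul_def, one_mul, star_smul, star_sub,
    star_star, smul_mul_assoc, mul_smul_comm, smul_smul, Complex.star_def, map_div₀, map_one,
    Complex.conj_ofNat]
  norm_num

lemma tilde_inner (F : H →L[ℂ] H) (x : H) :
    (inner ℂ (((1 : H →L[ℂ] H) + (1/4:ℂ) • ((F - adjoint F) * (adjoint F - F))) x) x : ℂ)
      = ((‖x‖^2 + ‖adjoint ((1/2:ℂ) • (F - adjoint F)) x‖^2 : ℝ) : ℂ) := by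
  set B := (1/2:ℂ) • (F - adjoint F) with hB
  have h := tilde_B_eq F
  rw [← h]
  rw [ContinuousLinearMap.add_apply, inner_add_left, ContinuousLinearMap.one_apply]
  have h2 : (inner ℂ ((B ∘L ((1 : H →L[ℂ] H) ∘L adjoint B)) x) x : ℂ)
      = inner ℂ (adjoint B x) (adjoint B x) := by
    have : (B ∘L ((1 : H →L[ℂ] H) ∘L adjoint B)) x = B (adjoint B x) := by
      simp [ContinuousLinearMap.comp_apply]
    rw [this]
    exact (adjoint_inner_right B (adjoint B x) x).symm
  rw [h2, inner_self_eq_norm_sq_to_K, inner_self_eq_norm_sq_to_K]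
  norm_cast

end MainAux

/-- For a bounded operator F on a Hilbert space, 1 + ¼(F−F*)(F*−F) is a
positive invertible operator, and if T denotes its inverse and
F̃ = (¼(FF*−F*F) + ½(F+F*))T, then F² = 1 implies F̃² = 1 and F̃* = F̃. -/
theorem tilde_operator_selfadjoint_involution
    {H : Type*} [NormedAddCommGroup H] [InnerProductSpace ℂ H] [CompleteSpace H]
    (F : H →L[ℂ] H) :
    ((1 : H →L[ℂ] H) + (1 / 4 : ℂ) • ((F - adjoint F) * (adjoint F - F))).IsPositive ∧
    IsUnit ((1 : H →L[ℂ] H) + (1 / 4 : ℂ) • ((F - adjoint F) * (adjoint F - F))) ∧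
    ∀ T : H →L[ℂ] H,
      ((1 + (1 / 4 : ℂ) • ((F - adjoint F) * (adjoint F - F))) * T = 1 ∧
        T * (1 + (1 / 4 : ℂ) • ((F - adjoint F) * (adjoint F - F))) = 1) →
      F * F = 1 →
      ((((1 / 4 : ℂ) • (F * adjoint F - adjoint F * F) + (1 / 2 : ℂ) • (F + adjoint F)) * T) *
          (((1 / 4 : ℂ) • (F * adjoint F - adjoint F * F) + (1 / 2 : ℂ) • (F + adjoint F)) * T) = 1 ∧
        adjoint (((1 / 4 : ℂ) • (F * adjoint F - adjoint F * F) + (1 / 2 : ℂ) • (F + adjoint F)) * T) =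
          ((1 / 4 : ℂ) • (F * adjoint F - adjoint F * F) + (1 / 2 : ℂ) • (F + adjoint F)) * T) := by
  refine ⟨?_, ?_, ?_⟩
  · have h := isPositive_one.add
      ((isPositive_one (E := H) (𝕜 := ℂ)).conj_adjoint ((1/2:ℂ) • (F - adjoint F)))
    rwa [tilde_B_eq F] at h
  · apply isUnit_of_forall_le_norm_inner_map _ (c := 1) one_pos
    intro x
    rw [tilde_inner F x, Complex.norm_real]
    have h1 : (0:ℝ) ≤ ‖x‖^2 + ‖adjoint ((1/2:ℂ) • (F - adjoint F)) x‖^2 := by positivity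
    rw [Real.norm_eq_abs, abs_of_nonneg h1]
    have h2 : (0:ℝ) ≤ ‖adjoint ((1/2:ℂ) • (F - adjoint F)) x‖^2 := by positivity
    push_cast
    nlinarith
  · rintro T ⟨hT1, hT2⟩ hFF
    simp only [← star_eq_adjoint] at hT1 hT2 ⊢
    exact tilde_aux F (star F) T rfl hFF hT1 hT2
end

section
/- Let R be a unital involutive algebra, and let F ∈ R with F² = 1. Suppose 1 + (1/4)(F − F*)(F* − F) is invertible with inverse T, and set F̃ = ((1/4)(FF* − F*F) + (1/2)(F + F*)) T. Define F_t = (1 + (t/2)(F − F̃)) F (1 + (t/2)(F̃ − F)) for t ∈ ℝ. Then F_t² = 1 for all t, F_0 = F, and F_1 = F̃. Moreover if F is selfadjoint then F_t = F for all t. -/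
variable {R : Type*} [Ring R] [Algebra ℂ R] [StarRing R] [StarModule ℂ R]

/-- The canonical selfadjoint replacement F̃ = (¼(FF*−F*F) + ½(F+F*))T of F,
where T is the inverse of 1 + ¼(F−F*)(F*−F). -/
noncomputable def tildeF (F T : R) : R :=
  ((1 / 4 : ℂ) • (F * star F - star F * F) + (1 / 2 : ℂ) • (F + star F)) * T

/-- The path F_t = (1 + (t/2)(F−F̃)) F (1 + (t/2)(F̃−F)). -/
noncomputable def pathF (F T : R) (t : ℝ) : R :=
  (1 + ((t : ℂ) / 2) • (F - tildeF F T)) * F * (1 + ((t : ℂ) / 2) • (tildeF F T - F))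

/-- In a unital involutive algebra, if F² = 1 and 1 + ¼(F−F*)(F*−F) is
invertible with inverse T, then the path F_t satisfies F_t² = 1 for all t, F_0 = F,
F_1 = F̃, and F_t = F for all t whenever F is selfadjoint. -/
theorem pathF_involution (F T : R) (hF : F * F = 1)
    (hT1 : (1 + (1 / 4 : ℂ) • ((F - star F) * (star F - F))) * T = 1)
    (hT2 : T * (1 + (1 / 4 : ℂ) • ((F - star F) * (star F - F))) = 1) :
    (∀ t : ℝ, pathF F T t * pathF F T t = 1) ∧
      pathF F T 0 = F ∧
      pathF F T 1 = tildeF F T ∧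
      (star F = F → ∀ t : ℝ, pathF F T t = F) := by
  have hS : star F * star F = (1 : R) := by
    have := congrArg star hF
    simpa [star_mul] using this
  set S := star F with hSdef
  have hF1 : ∀ x : R, F * (F * x) = x := fun x => by rw [← mul_assoc, hF, one_mul]
  have hS1 : ∀ x : R, S * (S * x) = x := fun x => by rw [← mul_assoc, hS, one_mul]
  set Z : R := 1 + (1/4 : ℂ) • ((F - S) * (S - F)) with hZ
  set N : R := (1/4 : ℂ) • (F * S - S * F) + (1/2 : ℂ) • (F + S) with hN
  have C1 : Z * F = F * Z := by
    simp only [hZ, hN, add_mul, mul_add, sub_mul, mul_sub, smul_mul_assoc, mul_smul_comm,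
      smul_smul, smul_add, smul_sub, mul_assoc, one_mul, mul_one, hF1, hS1, hF, hS]
    module
  have C2 : Z * N = N * Z := by
    simp only [hZ, hN, add_mul, mul_add, sub_mul, mul_sub, smul_mul_assoc, mul_smul_comm,
      smul_smul, smul_add, smul_sub, mul_assoc, one_mul, mul_one, hF1, hS1, hF, hS]
    module
  have C3 : F * N + N * F = Z + Z := by
    simp only [hZ, hN, add_mul, mul_add, sub_mul, mul_sub, smul_mul_assoc, mul_smul_comm,
      smul_smul, smul_add, smul_sub, mul_assoc, one_mul, mul_one, hF1, hS1, hF, hS]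
    module
  have C4 : N * N = Z * Z := by
    simp only [hZ, hN, add_mul, mul_add, sub_mul, mul_sub, smul_mul_assoc, mul_smul_comm,
      smul_smul, smul_add, smul_sub, mul_assoc, one_mul, mul_one, hF1, hS1, hF, hS]
    module
  have C5 : F * N = Z - F * Z + N := by
    simp only [hZ, hN, add_mul, mul_add, sub_mul, mul_sub, smul_mul_assoc, mul_smul_comm,
      smul_smul, smul_add, smul_sub, mul_assoc, one_mul, mul_one, hF1, hS1, hF, hS]
    module
  -- T commutes with F and N
  have hTF : T * F = F * T := by
    have h := congrArg (fun x => T * x * T) C1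
    simp only [← mul_assoc] at h
    rw [hT2, one_mul] at h
    rw [mul_assoc (T * F), hT1, mul_one] at h
    exact h.symm
  have hTN : T * N = N * T := by
    have h := congrArg (fun x => T * x * T) C2
    simp only [← mul_assoc] at h
    rw [hT2, one_mul] at h
    rw [mul_assoc (T * N), hT1, mul_one] at h
    exact h.symm
  have htF : tildeF F T = N * T := by rw [tildeF, hN, hSdef]
  -- key identities for tildeF
  have h3 : F * tildeF F T = 1 - F + tildeF F T := by
    rw [htF, ← mul_assoc, C5, add_mul, sub_mul, mul_assoc, hT1, mul_one]
  have h1 : F * tildeF F T + tildeF F T * F = 1 + 1 := by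
    rw [htF, ← mul_assoc, mul_assoc N T F, hTF, ← mul_assoc, ← add_mul, C3, add_mul, hT1]
  have h2 : tildeF F T * tildeF F T = 1 := by
    rw [htF, mul_assoc, ← mul_assoc T N T, hTN, mul_assoc N T, ← mul_assoc, C4,
      mul_assoc, ← mul_assoc Z T T, hT1, one_mul, hT1]
  have h1' : tildeF F T * F = 1 + F - tildeF F T := by
    have h := eq_sub_of_add_eq' h1
    rw [h3] at h
    rw [h]; abel
  set A : R := F - tildeF F T with hA
  have hFA : F * A = A := by
    rw [hA, mul_sub, hF, h3]; abel
  have hAF : A * F = -A := by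
    rw [hA, sub_mul, hF, h1']; abel
  have hA2 : A * A = 0 := by
    have e : A * A = F * F - (F * tildeF F T + tildeF F T * F) + tildeF F T * tildeF F T := by
      rw [hA]; noncomm_ring
    rw [hF, h1, h2] at e
    rw [e]; abel
  have hpath : ∀ s : ℂ, (1 + s • A) * F * (1 - s • A) = F - (s + s) • A := by
    intro s
    have e1 : (1 + s • A) * F = F - s • A := by
      rw [add_mul, one_mul, smul_mul_assoc, hAF, smul_neg, ← sub_eq_add_neg]
    have e2 : (s • A) * (1 - s • A) = s • A := by
      rw [mul_sub, mul_one, smul_mul_assoc, mul_smul_comm, hA2, smul_zero, smul_zero, sub_zero]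
    rw [e1, sub_mul, mul_sub, mul_one, mul_smul_comm, hFA, e2]
    module
  have neg1 : ∀ s : ℂ, (1 + s • (tildeF F T - F)) = 1 - s • A := by
    intro s
    rw [hA, ← neg_sub F (tildeF F T), smul_neg, ← sub_eq_add_neg]
  have hpathF : ∀ t : ℝ, pathF F T t = F - (((t : ℂ)/2) + ((t : ℂ)/2)) • A := by
    intro t
    rw [pathF, neg1, ← hA, hpath]
  refine ⟨?_, ?_, ?_, ?_⟩
  · intro t
    rw [hpathF]
    set u : ℂ := ((t : ℂ)/2) + ((t : ℂ)/2)
    rw [sub_mul, mul_sub, mul_sub, hF, mul_smul_comm, hFA, smul_mul_assoc, hAF, smul_neg,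
      smul_mul_assoc, mul_smul_comm, hA2, smul_zero, smul_zero]
    module
  · rw [hpathF]
    norm_num
  · rw [hpathF, hA]
    push_cast
    norm_num
  · intro hst t
    have hZ1 : Z = 1 := by
      rw [hZ, hst, sub_self, zero_mul, smul_zero, add_zero]
    have hT : T = 1 := by rw [hZ1, one_mul] at hT1; exact hT1
    have htFF : tildeF F T = F := by
      rw [htF, hT, mul_one, hN, hst, sub_self, smul_zero, zero_add, smul_add, ← add_smul,
        show (1/2 + 1/2 : ℂ) = 1 by norm_num, one_smul]
    rw [hpathF, hA, htFF, sub_self, smul_zero, sub_zero]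
end
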